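/- arXiv:1501.03925 — 3 statements merged into one kernel-verified Lean document; each statement's English description precedes it below -/
import Mathlib

section
/- For β ∈ (1,2), a smooth function f, and x > a, the Caputo derivative satisfies D^β_{a+⋆}f(x) = (1/Γ(-β)) ∫_0^{x-a} (f(x-z) - f(x) + f'(x)z) z^{-1-β} dz + (f(x) - f(a))(x-a)^{-β}/Γ(1-β) + (β f'(x) - f'(a))(x-a)^{1-β}/Γ(2-β). -/
open Real MeasureTheory Set Filter Topology intervalIntegral

lemma caputo_aux_rpow_tendsto {p : ℝ} (hp : 0 < p) :
    Tendsto (fun ε : ℝ => ε ^ p) (𝓝[>] (0:ℝ)) (𝓝 0) := by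
  have h := (Real.continuousAt_rpow_const 0 p (Or.inr hp.le)).tendsto
  rw [Real.zero_rpow hp.ne'] at h
  exact h.mono_left nhdsWithin_le_nhds

lemma caputo_aux_integrable {h : ℝ → ℝ} {C r L : ℝ} (hr : -1 < r) (hL : 0 < L)
    (hcont : ContinuousOn h (Ioc 0 L))
    (hbd : ∀ z ∈ Ioc 0 L, ‖h z‖ ≤ C * z ^ r) :
    IntervalIntegrable h volume 0 L := by
  have hdom : IntervalIntegrable (fun z : ℝ => C * z ^ r) volume 0 L :=
    (intervalIntegral.intervalIntegrable_rpow' hr).const_mul C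
  refine hdom.mono_fun ?_ ?_
  · rw [Set.uIoc_of_le hL.le]
    exact hcont.aestronglyMeasurable measurableSet_Ioc
  · rw [Set.uIoc_of_le hL.le]
    filter_upwards [ae_restrict_mem measurableSet_Ioc] with z hz
    exact (hbd z hz).trans (le_abs_self _)

lemma caputo_aux_tendsto {h : ℝ → ℝ} {C r L : ℝ} (hr : -1 < r) (hL : 0 < L)
    (hcont : ContinuousOn h (Ioc 0 L))
    (hbd : ∀ z ∈ Ioc 0 L, ‖h z‖ ≤ C * z ^ r) :
    Tendsto (fun ε => ∫ z in ε..L, h z) (𝓝[>] (0:ℝ)) (𝓝 (∫ z in (0:ℝ)..L, h z)) := by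
  have hint := caputo_aux_integrable hr hL hcont hbd
  have hmem : Ioo (0:ℝ) L ∈ 𝓝[>] (0:ℝ) := Ioo_mem_nhdsGT_of_mem ⟨le_refl 0, hL⟩
  have key : Tendsto (fun ε => ∫ z in (0:ℝ)..ε, h z) (𝓝[>] (0:ℝ)) (𝓝 0) := by
    apply squeeze_zero_norm' (a := fun ε => |C * ε ^ (r+1) / (r+1)|)
    · filter_upwards [hmem] with ε hε
      have hsub : Set.Ioc 0 ε ⊆ Set.Ioc 0 L := Set.Ioc_subset_Ioc le_rfl hε.2.le
      have h1 : IntervalIntegrable (fun z : ℝ => C * z ^ r) volume 0 ε :=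
        (intervalIntegral.intervalIntegrable_rpow' hr).const_mul C
      calc ‖∫ z in (0:ℝ)..ε, h z‖ ≤ |∫ z in (0:ℝ)..ε, C * z ^ r| := by
            apply intervalIntegral.norm_integral_le_abs_of_norm_le ?_ h1
            rw [Set.uIoc_of_le hε.1.le]
            filter_upwards [ae_restrict_mem measurableSet_Ioc] with z hz
            exact hbd z (hsub hz)
        _ = |C * ε ^ (r+1) / (r+1)| := by
            rw [intervalIntegral.integral_const_mul, integral_rpow (Or.inl hr),
              Real.zero_rpow (by linarith : r + 1 ≠ 0)]
            ring_nf
    · have h2 := (((caputo_aux_rpow_tendsto (by linarith : (0:ℝ) < r + 1)).const_mul C).div_const (r+1)).abs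
      simpa using h2
  have hev : (fun ε => ∫ z in ε..L, h z) =ᶠ[𝓝[>] (0:ℝ)]
      (fun ε => (∫ z in (0:ℝ)..L, h z) - ∫ z in (0:ℝ)..ε, h z) := by
    filter_upwards [hmem] with ε hε
    have hε1 : ε ∈ Set.uIcc (0:ℝ) L := by
      rw [Set.uIcc_of_le hL.le]; exact ⟨hε.1.le, hε.2.le⟩
    have i1 : IntervalIntegrable h volume 0 ε :=
      hint.mono_set (Set.uIcc_subset_uIcc Set.left_mem_uIcc hε1)
    have i2 : IntervalIntegrable h volume ε L :=
      hint.mono_set (Set.uIcc_subset_uIcc hε1 Set.right_mem_uIcc)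
    have := intervalIntegral.integral_add_adjacent_intervals i1 i2
    linarith [this]
  refine Tendsto.congr' hev.symm ?_
  simpa using tendsto_const_nhds.sub key

/-- For β ∈ (1,2), the Caputo derivative equals the generator-type
singular integral plus boundary terms. -/
theorem caputo_generator_form_order_two (β a : ℝ) (hβ : β ∈ Set.Ioo (1:ℝ) 2)
    (f f' f'' : ℝ → ℝ) (hf' : ∀ t ∈ Set.Ici a, HasDerivAt f (f' t) t)
    (hf'' : ∀ t ∈ Set.Ici a, HasDerivAt f' (f'' t) t)
    (hf''c : ContinuousOn f'' (Set.Ici a)) (x : ℝ) (hx : a < x) :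
    (1 / Real.Gamma (2 - β)) * ∫ t in a..x, (x - t) ^ (1 - β) * f'' t
      = (1 / Real.Gamma (-β)) *
          (∫ z in (0:ℝ)..(x - a), (f (x - z) - f x + f' x * z) * z ^ (-1 - β))
        + (f x - f a) * (x - a) ^ (-β) / Real.Gamma (1 - β)
        + (β * f' x - f' a) * (x - a) ^ (1 - β) / Real.Gamma (2 - β) := by
  obtain ⟨hβ1, hβ2⟩ := hβ
  set L : ℝ := x - a with hLdef
  have hL : 0 < L := by simp only [hLdef]; linarith
  set g : ℝ → ℝ := fun z => f (x - z) - f x + f' x * z with hgdef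
  set G : ℝ → ℝ := fun z => f' x - f' (x - z) with hGdef
  have hmemIci : ∀ z ∈ Set.Icc (0:ℝ) L, x - z ∈ Set.Ici a := by
    intro z hz
    have := hz.2
    simp only [hLdef] at this
    simp only [Set.mem_Ici]; linarith
  have hmaps : Set.MapsTo (fun z : ℝ => x - z) (Set.Icc 0 L) (Set.Ici a) := hmemIci
  -- derivatives of g and G
  have hgd : ∀ z ∈ Set.Icc (0:ℝ) L, HasDerivAt g (G z) z := by
    intro z hz
    have h1 : HasDerivAt (fun z : ℝ => x - z) (-1) z := by
      simpa using (hasDerivAt_id z).const_sub x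
    have h2 : HasDerivAt (fun z : ℝ => f (x - z)) (f' (x - z) * (-1)) z :=
      (hf' _ (hmemIci z hz)).comp z h1
    have h3 : HasDerivAt (fun z : ℝ => f' x * z) (f' x) z := by
      simpa using (hasDerivAt_id z).const_mul (f' x)
    have h4 := (h2.sub_const (f x)).add h3
    refine h4.congr_deriv ?_
    simp only [hGdef]; ring
  have hGd : ∀ z ∈ Set.Icc (0:ℝ) L, HasDerivAt G (f'' (x - z)) z := by
    intro z hz
    have h1 : HasDerivAt (fun z : ℝ => x - z) (-1) z := by
      simpa using (hasDerivAt_id z).const_sub x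
    have h2 : HasDerivAt (fun z : ℝ => f' (x - z)) (f'' (x - z) * (-1)) z :=
      (hf'' _ (hmemIci z hz)).comp z h1
    have h4 := h2.const_sub (f' x)
    refine h4.congr_deriv ?_
    ring
  -- continuity
  have hf'c : ContinuousOn f' (Set.Ici a) := fun t ht =>
    (hf'' t ht).continuousAt.continuousWithinAt
  have hfc : ContinuousOn f (Set.Ici a) := fun t ht =>
    (hf' t ht).continuousAt.continuousWithinAt
  have hxz : ContinuousOn (fun z : ℝ => x - z) (Set.Icc 0 L) :=
    continuousOn_const.sub continuousOn_id
  have hf2c : ContinuousOn (fun z : ℝ => f'' (x - z)) (Set.Icc 0 L) :=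
    hf''c.comp hxz hmaps
  have hGc : ContinuousOn G (Set.Icc 0 L) :=
    continuousOn_const.sub (hf'c.comp hxz hmaps)
  have hgc : ContinuousOn g (Set.Icc 0 L) :=
    (((hfc.comp hxz hmaps)).sub continuousOn_const).add
      (continuousOn_const.mul continuousOn_id)
  -- bound on f''(x - ·)
  obtain ⟨M0, hM0⟩ := isCompact_Icc.exists_bound_of_continuousOn hf2c
  set M : ℝ := max M0 0 with hMdef
  have hMnn : 0 ≤ M := le_max_right _ _
  have hM : ∀ z ∈ Set.Icc (0:ℝ) L, |f'' (x - z)| ≤ M := fun z hz =>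
    (hM0 z hz).trans (le_max_left _ _)
  -- bound on G
  have hGbd : ∀ s ∈ Set.Icc (0:ℝ) L, |G s| ≤ M * s := by
    intro s hs
    have hsub : Set.uIcc (0:ℝ) s ⊆ Set.Icc 0 L := by
      rw [Set.uIcc_of_le hs.1]; exact Set.Icc_subset_Icc le_rfl hs.2
    have hd : ∀ u ∈ Set.uIcc (0:ℝ) s, HasDerivAt G (f'' (x - u)) u :=
      fun u hu => hGd u (hsub hu)
    have hi : IntervalIntegrable (fun u => f'' (x - u)) volume 0 s :=
      (hf2c.mono hsub).intervalIntegrable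
    have he := intervalIntegral.integral_eq_sub_of_hasDerivAt hd hi
    have hG0 : G 0 = 0 := by simp [hGdef]
    have hb : ‖∫ u in (0:ℝ)..s, f'' (x - u)‖ ≤ M * |s - 0| := by
      apply intervalIntegral.norm_integral_le_of_norm_le_const
      intro u hu
      rw [Set.uIoc_of_le hs.1] at hu
      exact hM u ⟨hu.1.le, hu.2.trans hs.2⟩
    rw [he, hG0, sub_zero] at hb
    simpa [abs_of_nonneg hs.1] using hb
  -- bound on g
  have hgbd : ∀ s ∈ Set.Icc (0:ℝ) L, |g s| ≤ M * s * s := by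
    intro s hs
    have hsub : Set.uIcc (0:ℝ) s ⊆ Set.Icc 0 L := by
      rw [Set.uIcc_of_le hs.1]; exact Set.Icc_subset_Icc le_rfl hs.2
    have hd : ∀ u ∈ Set.uIcc (0:ℝ) s, HasDerivAt g (G u) u :=
      fun u hu => hgd u (hsub hu)
    have hi : IntervalIntegrable G volume 0 s := (hGc.mono hsub).intervalIntegrable
    have he := intervalIntegral.integral_eq_sub_of_hasDerivAt hd hi
    have hg0 : g 0 = 0 := by simp [hgdef]
    have hb : ‖∫ u in (0:ℝ)..s, G u‖ ≤ (M * s) * |s - 0| := by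
      apply intervalIntegral.norm_integral_le_of_norm_le_const
      intro u hu
      rw [Set.uIoc_of_le hs.1] at hu
      have h1 := hGbd u ⟨hu.1.le, hu.2.trans hs.2⟩
      have h2 : M * u ≤ M * s := mul_le_mul_of_nonneg_left hu.2 hMnn
      calc ‖G u‖ ≤ M * u := h1
        _ ≤ M * s := h2
    rw [he, hg0, sub_zero] at hb
    calc |g s| ≤ M * s * |s - 0| := hb
      _ = M * s * s := by rw [sub_zero, abs_of_nonneg hs.1]
  -- integrand bounds on Ioc 0 L
  have hb1 : ∀ z ∈ Set.Ioc (0:ℝ) L, ‖z ^ (1 - β) * f'' (x - z)‖ ≤ M * z ^ (1 - β) := by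
    intro z hz
    have hz0 : (0:ℝ) < z := hz.1
    rw [norm_mul, Real.norm_rpow_of_nonneg hz0.le, Real.norm_eq_abs]
    calc |z| ^ (1 - β) * |f'' (x - z)| ≤ |z| ^ (1 - β) * M := by
          apply mul_le_mul_of_nonneg_left (hM z ⟨hz0.le, hz.2⟩)
          positivity
      _ = M * z ^ (1 - β) := by rw [abs_of_nonneg hz0.le]; ring
  have hb2 : ∀ z ∈ Set.Ioc (0:ℝ) L, ‖z ^ (-β) * G z‖ ≤ M * z ^ (1 - β) := by
    intro z hz
    have hz0 : (0:ℝ) < z := hz.1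
    have key : z ^ (-β) * z = z ^ (1 - β) := by
      rw [show (1:ℝ) - β = -β + 1 by ring, Real.rpow_add hz0, Real.rpow_one]
    rw [norm_mul, Real.norm_rpow_of_nonneg hz0.le, Real.norm_eq_abs, abs_of_nonneg hz0.le]
    calc z ^ (-β) * |G z| ≤ z ^ (-β) * (M * z) := by
          apply mul_le_mul_of_nonneg_left (hGbd z ⟨hz0.le, hz.2⟩)
          positivity
      _ = M * z ^ (1 - β) := by rw [← key]; ring
  have hb3 : ∀ z ∈ Set.Ioc (0:ℝ) L, ‖z ^ (-1 - β) * g z‖ ≤ M * z ^ (1 - β) := by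
    intro z hz
    have hz0 : (0:ℝ) < z := hz.1
    have key : z ^ (-1 - β) * z * z = z ^ (1 - β) := by
      rw [show (1:ℝ) - β = -1 - β + 1 + 1 by ring, Real.rpow_add hz0, Real.rpow_add hz0,
        Real.rpow_one]
    rw [norm_mul, Real.norm_rpow_of_nonneg hz0.le, Real.norm_eq_abs, abs_of_nonneg hz0.le]
    calc z ^ (-1 - β) * |g z| ≤ z ^ (-1 - β) * (M * z * z) := by
          apply mul_le_mul_of_nonneg_left (hgbd z ⟨hz0.le, hz.2⟩)
          positivity
      _ = M * z ^ (1 - β) := by rw [← key]; ring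
  -- continuity of integrands on Ioc 0 L
  have hidc : ContinuousOn (fun z : ℝ => z) (Set.Ioc (0:ℝ) L) := continuousOn_id
  have hrc : ∀ p : ℝ, ContinuousOn (fun z : ℝ => z ^ p) (Set.Ioc (0:ℝ) L) := by
    intro p
    exact hidc.rpow_const fun z hz => Or.inl (ne_of_gt hz.1)
  have hc1 : ContinuousOn (fun z : ℝ => z ^ (1 - β) * f'' (x - z)) (Set.Ioc (0:ℝ) L) :=
    (hrc _).mul (hf2c.mono Set.Ioc_subset_Icc_self)
  have hc2 : ContinuousOn (fun z : ℝ => z ^ (-β) * G z) (Set.Ioc (0:ℝ) L) :=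
    (hrc _).mul (hGc.mono Set.Ioc_subset_Icc_self)
  have hc3 : ContinuousOn (fun z : ℝ => z ^ (-1 - β) * g z) (Set.Ioc (0:ℝ) L) :=
    (hrc _).mul (hgc.mono Set.Ioc_subset_Icc_self)
  have hr1 : (-1:ℝ) < 1 - β := by linarith
  -- the three tendsto facts
  have T1 := caputo_aux_tendsto hr1 hL hc1 hb1
  have T2 := caputo_aux_tendsto hr1 hL hc2 hb2
  have T3 := caputo_aux_tendsto hr1 hL hc3 hb3
  set I1 : ℝ := ∫ z in (0:ℝ)..L, z ^ (1 - β) * f'' (x - z) with hI1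
  set I2 : ℝ := ∫ z in (0:ℝ)..L, z ^ (-β) * G z with hI2
  set I3 : ℝ := ∫ z in (0:ℝ)..L, z ^ (-1 - β) * g z with hI3
  have hmem : Set.Ioo (0:ℝ) L ∈ 𝓝[>] (0:ℝ) := Ioo_mem_nhdsGT_of_mem ⟨le_refl 0, hL⟩
  -- boundary tendsto facts
  have hbt1 : Tendsto (fun ε => ε ^ (1 - β) * G ε) (𝓝[>] (0:ℝ)) (𝓝 0) := by
    apply squeeze_zero_norm' (a := fun ε => M * ε ^ (2 - β))
    · filter_upwards [hmem] with ε hε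
      have hε0 : (0:ℝ) < ε := hε.1
      have key : ε ^ (1 - β) * ε = ε ^ (2 - β) := by
        rw [show (2:ℝ) - β = 1 - β + 1 by ring, Real.rpow_add hε0, Real.rpow_one]
      rw [norm_mul, Real.norm_rpow_of_nonneg hε0.le, Real.norm_eq_abs, abs_of_nonneg hε0.le]
      calc ε ^ (1 - β) * |G ε| ≤ ε ^ (1 - β) * (M * ε) := by
            apply mul_le_mul_of_nonneg_left (hGbd ε ⟨hε0.le, hε.2.le⟩)
            positivity
        _ = M * ε ^ (2 - β) := by rw [← key]; ring
    · simpa using (caputo_aux_rpow_tendsto (by linarith : (0:ℝ) < 2 - β)).const_mul M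
  have hbt2 : Tendsto (fun ε => ε ^ (-β) * g ε) (𝓝[>] (0:ℝ)) (𝓝 0) := by
    apply squeeze_zero_norm' (a := fun ε => M * ε ^ (2 - β))
    · filter_upwards [hmem] with ε hε
      have hε0 : (0:ℝ) < ε := hε.1
      have key : ε ^ (-β) * ε * ε = ε ^ (2 - β) := by
        rw [show (2:ℝ) - β = -β + 1 + 1 by ring, Real.rpow_add hε0, Real.rpow_add hε0,
          Real.rpow_one]
      rw [norm_mul, Real.norm_rpow_of_nonneg hε0.le, Real.norm_eq_abs, abs_of_nonneg hε0.le]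
      calc ε ^ (-β) * |g ε| ≤ ε ^ (-β) * (M * ε * ε) := by
            apply mul_le_mul_of_nonneg_left (hgbd ε ⟨hε0.le, hε.2.le⟩)
            positivity
        _ = M * ε ^ (2 - β) := by rw [← key]; ring
    · simpa using (caputo_aux_rpow_tendsto (by linarith : (0:ℝ) < 2 - β)).const_mul M
  -- integration by parts identities for ε ∈ (0, L)
  have hevA : (fun ε => ∫ z in ε..L, z ^ (1 - β) * f'' (x - z)) =ᶠ[𝓝[>] (0:ℝ)]
      (fun ε => L ^ (1 - β) * G L - ε ^ (1 - β) * G ε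
        - (1 - β) * ∫ z in ε..L, z ^ (-β) * G z) := by
    filter_upwards [hmem] with ε hε
    have hsub : Set.uIcc ε L ⊆ Set.Icc 0 L := by
      rw [Set.uIcc_of_le hε.2.le]; exact Set.Icc_subset_Icc hε.1.le le_rfl
    have hu : ∀ z ∈ Set.uIcc ε L, HasDerivAt (fun z : ℝ => z ^ (1 - β))
        ((1 - β) * z ^ (-β)) z := by
      intro z hz
      rw [Set.uIcc_of_le hε.2.le] at hz
      have hz0 : z ≠ 0 := ne_of_gt (lt_of_lt_of_le hε.1 hz.1)
      have := Real.hasDerivAt_rpow_const (x := z) (p := 1 - β) (Or.inl hz0)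
      convert this using 2
      ring
    have hv : ∀ z ∈ Set.uIcc ε L, HasDerivAt G (f'' (x - z)) z :=
      fun z hz => hGd z (hsub hz)
    have hzne : ∀ z ∈ Set.uIcc ε L, z ≠ 0 := by
      intro z hz
      rw [Set.uIcc_of_le hε.2.le] at hz
      exact ne_of_gt (lt_of_lt_of_le hε.1 hz.1)
    have hu' : IntervalIntegrable (fun z : ℝ => (1 - β) * z ^ (-β)) volume ε L :=
      (continuousOn_const.mul (continuousOn_id.rpow_const
        fun z hz => Or.inl (hzne z hz))).intervalIntegrable
    have hv' : IntervalIntegrable (fun z : ℝ => f'' (x - z)) volume ε L :=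
      (hf2c.mono hsub).intervalIntegrable
    have hibp := intervalIntegral.integral_mul_deriv_eq_deriv_mul hu hv hu' hv'
    rw [hibp]
    have : ∫ z in ε..L, (1 - β) * z ^ (-β) * G z
        = (1 - β) * ∫ z in ε..L, z ^ (-β) * G z := by
      rw [← intervalIntegral.integral_const_mul]
      congr 1; ext z; ring
    rw [this]
  have hevB : (fun ε => ∫ z in ε..L, z ^ (-β) * G z) =ᶠ[𝓝[>] (0:ℝ)]
      (fun ε => L ^ (-β) * g L - ε ^ (-β) * g ε
        + β * ∫ z in ε..L, z ^ (-1 - β) * g z) := by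
    filter_upwards [hmem] with ε hε
    have hsub : Set.uIcc ε L ⊆ Set.Icc 0 L := by
      rw [Set.uIcc_of_le hε.2.le]; exact Set.Icc_subset_Icc hε.1.le le_rfl
    have hzne : ∀ z ∈ Set.uIcc ε L, z ≠ 0 := by
      intro z hz
      rw [Set.uIcc_of_le hε.2.le] at hz
      exact ne_of_gt (lt_of_lt_of_le hε.1 hz.1)
    have hu : ∀ z ∈ Set.uIcc ε L, HasDerivAt (fun z : ℝ => z ^ (-β))
        (-β * z ^ (-1 - β)) z := by
      intro z hz
      have := Real.hasDerivAt_rpow_const (x := z) (p := -β) (Or.inl (hzne z hz))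
      convert this using 2
      ring
    have hv : ∀ z ∈ Set.uIcc ε L, HasDerivAt g (G z) z :=
      fun z hz => hgd z (hsub hz)
    have hu' : IntervalIntegrable (fun z : ℝ => -β * z ^ (-1 - β)) volume ε L :=
      (continuousOn_const.mul (continuousOn_id.rpow_const
        fun z hz => Or.inl (hzne z hz))).intervalIntegrable
    have hv' : IntervalIntegrable G volume ε L := (hGc.mono hsub).intervalIntegrable
    have hibp := intervalIntegral.integral_mul_deriv_eq_deriv_mul hu hv hu' hv'
    rw [hibp]
    have : ∫ z in ε..L, -β * z ^ (-1 - β) * g z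
        = -β * ∫ z in ε..L, z ^ (-1 - β) * g z := by
      rw [← intervalIntegral.integral_const_mul]
      congr 1; ext z; ring
    rw [this]
    ring
  -- take limits
  have limA : Tendsto (fun ε => L ^ (1 - β) * G L - ε ^ (1 - β) * G ε
      - (1 - β) * ∫ z in ε..L, z ^ (-β) * G z) (𝓝[>] (0:ℝ))
      (𝓝 (L ^ (1 - β) * G L - 0 - (1 - β) * I2)) :=
    (tendsto_const_nhds.sub hbt1).sub (T2.const_mul (1 - β))
  have eqA : I1 = L ^ (1 - β) * G L - 0 - (1 - β) * I2 :=
    tendsto_nhds_unique (T1.congr' hevA) limA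
  have limB : Tendsto (fun ε => L ^ (-β) * g L - ε ^ (-β) * g ε
      + β * ∫ z in ε..L, z ^ (-1 - β) * g z) (𝓝[>] (0:ℝ))
      (𝓝 (L ^ (-β) * g L - 0 + β * I3)) :=
    (tendsto_const_nhds.sub hbt2).add (T3.const_mul β)
  have eqB : I2 = L ^ (-β) * g L - 0 + β * I3 :=
    tendsto_nhds_unique (T2.congr' hevB) limB
  -- substitution in the LHS integral
  have hsubs : (∫ t in a..x, (x - t) ^ (1 - β) * f'' t) = I1 := by
    have h := intervalIntegral.integral_comp_sub_left (a := a) (b := x)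
      (fun z => z ^ (1 - β) * f'' (x - z)) x
    simp only [sub_sub_cancel, sub_self] at h
    rw [hI1, ← h]
  -- the goal's singular integral equals I3
  have hcomm : (∫ z in (0:ℝ)..L, g z * z ^ (-1 - β)) = I3 := by
    rw [hI3]
    apply intervalIntegral.integral_congr
    intro z _
    exact mul_comm _ _
  -- Gamma identities
  have hb0 : β ≠ 0 := by linarith
  have h1b : (1:ℝ) - β ≠ 0 := by intro h; apply hb0; linarith
  have hΓ1 : Real.Gamma (1 - β) = -β * Real.Gamma (-β) := by
    have h := Real.Gamma_add_one (s := -β) (by simpa using hb0)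
    rw [show -β + 1 = 1 - β by ring] at h
    exact h
  have hΓ2 : Real.Gamma (2 - β) = (1 - β) * Real.Gamma (1 - β) := by
    have h := Real.Gamma_add_one (s := 1 - β) h1b
    rw [show 1 - β + 1 = 2 - β by ring] at h
    exact h
  have hΓ0ne : Real.Gamma (-β) ≠ 0 := by
    apply Real.Gamma_ne_zero
    intro m hm
    have hmb : β = (m : ℝ) := by linarith [neg_inj.mp hm]
    have h1 : (1:ℝ) < (m:ℝ) := hmb ▸ hβ1
    have h2 : ((m:ℝ)) < 2 := hmb ▸ hβ2
    have h1' : 1 < m := by exact_mod_cast h1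
    have h2' : m < 2 := by exact_mod_cast h2
    omega
  -- endpoint values
  have hGL : G L = f' x - f' a := by
    simp only [hGdef, hLdef, sub_sub_cancel]
  have hgL : g L = f a - f x + f' x * L := by
    simp only [hgdef, hLdef, sub_sub_cancel]
  have hLL : L ^ ((1:ℝ) - β) = L ^ (-β) * L := by
    rw [show (1:ℝ) - β = -β + 1 by ring, Real.rpow_add hL, Real.rpow_one]
  -- final algebra
  rw [hsubs, hcomm, eqA, eqB, hGL, hgL, hΓ2, hΓ1, hLL]
  field_simp
  ring
end

section
/- For β ∈ (1,2), a smooth function f, and x < a, the left Caputo derivative satisfies D^β_{a-⋆}f(x) = (1/Γ(-β)) ∫_0^{a-x} (f(x+z) - f(x) - f'(x)z) z^{-1-β} dz + (f(x) - f(a))(a-x)^{-β}/Γ(1-β) - (β f'(x) - f'(a))(a-x)^{1-β}/Γ(2-β). -/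
open Real MeasureTheory Set Filter Topology

/-- For β ∈ (1,2), the left Caputo derivative equals the generator-type
singular integral plus boundary terms, for x < a. -/
theorem left_caputo_generator_form_order_two (β a : ℝ) (hβ : β ∈ Set.Ioo (1:ℝ) 2)
    (f f' f'' : ℝ → ℝ) (hf' : ∀ t ∈ Set.Iic a, HasDerivAt f (f' t) t)
    (hf'' : ∀ t ∈ Set.Iic a, HasDerivAt f' (f'' t) t)
    (hf''c : ContinuousOn f'' (Set.Iic a)) (x : ℝ) (hx : x < a) :
    (1 / Real.Gamma (2 - β)) * ∫ t in x..a, (t - x) ^ (1 - β) * f'' t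
      = (1 / Real.Gamma (-β)) *
          (∫ z in (0:ℝ)..(a - x), (f (x + z) - f x - f' x * z) * z ^ (-1 - β))
        + (f x - f a) * (a - x) ^ (-β) / Real.Gamma (1 - β)
        - (β * f' x - f' a) * (a - x) ^ (1 - β) / Real.Gamma (2 - β) := by
  obtain ⟨hβ1, hβ2⟩ := hβ
  have hβ0 : (0:ℝ) < β := by linarith
  have h1β : (1:ℝ) - β ≠ 0 := by intro h; linarith [sub_eq_zero.mp h]
  set L : ℝ := a - x with hLdef
  have hL0 : 0 < L := by simp only [hLdef]; linarith
  set g : ℝ → ℝ := fun z => f (x + z) - f x - f' x * z with hg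
  set g1 : ℝ → ℝ := fun z => f' (x + z) - f' x with hg1
  set g2 : ℝ → ℝ := fun z => f'' (x + z) with hg2
  have hmem : ∀ z ∈ Set.Icc (0:ℝ) L, x + z ∈ Set.Iic a := by
    intro z hz; simp only [Set.mem_Iic]; have := hz.2; simp only [hLdef] at this; linarith
  -- derivatives of g and g1
  have hgd : ∀ z ∈ Set.Icc (0:ℝ) L, HasDerivAt g (g1 z) z := by
    intro z hz
    have h1 : HasDerivAt (fun z => f (x + z)) (f' (x + z)) z := by
      simpa [Function.comp_def] using (hf' (x + z) (hmem z hz)).comp z ((hasDerivAt_id z).const_add x)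
    simpa [hg, hg1, Pi.sub_def] using (h1.sub_const (f x)).sub ((hasDerivAt_id z).const_mul (f' x))
  have hg1d : ∀ z ∈ Set.Icc (0:ℝ) L, HasDerivAt g1 (g2 z) z := by
    intro z hz
    have h1 : HasDerivAt (fun z => f' (x + z)) (f'' (x + z)) z := by
      simpa [Function.comp_def] using (hf'' (x + z) (hmem z hz)).comp z ((hasDerivAt_id z).const_add x)
    simpa [hg1, hg2] using h1.sub_const (f' x)
  -- continuity
  have hgc : ContinuousOn g (Set.Icc 0 L) := fun z hz =>
    (hgd z hz).continuousAt.continuousWithinAt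
  have hg1c : ContinuousOn g1 (Set.Icc 0 L) := fun z hz =>
    (hg1d z hz).continuousAt.continuousWithinAt
  have hg2c : ContinuousOn g2 (Set.Icc 0 L) := by
    apply hf''c.comp (by fun_prop : Continuous (fun z : ℝ => x + z)).continuousOn
    intro z hz; exact hmem z hz
  -- bound on g2
  obtain ⟨M, hM⟩ : ∃ M, ∀ z ∈ Set.Icc (0:ℝ) L, |g2 z| ≤ M :=
    isCompact_Icc.exists_bound_of_continuousOn hg2c
  have hM0 : 0 ≤ M := le_trans (abs_nonneg _) (hM 0 ⟨le_refl _, hL0.le⟩)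
  -- bound on g1 : |g1 z| ≤ M * z
  have hg1b : ∀ z ∈ Set.Icc (0:ℝ) L, |g1 z| ≤ M * z := by
    intro z hz
    have hsub : Set.uIcc (0:ℝ) z ⊆ Set.Icc 0 L := by
      rw [Set.uIcc_of_le hz.1]; exact Set.Icc_subset_Icc le_rfl hz.2
    have hFTC : ∫ t in (0:ℝ)..z, g2 t = g1 z - g1 0 :=
      intervalIntegral.integral_eq_sub_of_hasDerivAt
        (fun t ht => hg1d t (hsub ht)) ((hg2c.mono hsub).intervalIntegrable)
    have h0 : g1 0 = 0 := by simp [hg1]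
    have := intervalIntegral.norm_integral_le_of_norm_le_const (C := M)
      (f := g2) (a := (0:ℝ)) (b := z) ?_
    · rw [hFTC, h0, sub_zero] at this
      simpa [abs_of_nonneg hz.1, mul_comm] using this
    · intro t ht
      rw [Set.uIoc_of_le hz.1] at ht
      exact hM t ⟨ht.1.le, ht.2.trans hz.2⟩
  -- bound on g : |g z| ≤ M * z * z
  have hgb : ∀ z ∈ Set.Icc (0:ℝ) L, |g z| ≤ M * z * z := by
    intro z hz
    have hsub : Set.uIcc (0:ℝ) z ⊆ Set.Icc 0 L := by
      rw [Set.uIcc_of_le hz.1]; exact Set.Icc_subset_Icc le_rfl hz.2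
    have hFTC : ∫ t in (0:ℝ)..z, g1 t = g z - g 0 :=
      intervalIntegral.integral_eq_sub_of_hasDerivAt
        (fun t ht => hgd t (hsub ht)) ((hg1c.mono hsub).intervalIntegrable)
    have h0 : g 0 = 0 := by simp [hg]
    have := intervalIntegral.norm_integral_le_of_norm_le_const (C := M * z)
      (f := g1) (a := (0:ℝ)) (b := z) ?_
    · rw [hFTC, h0, sub_zero] at this
      simpa [abs_of_nonneg hz.1, mul_comm] using this
    · intro t ht
      rw [Set.uIoc_of_le hz.1] at ht
      refine (hg1b t ⟨ht.1.le, ht.2.trans hz.2⟩).trans ?_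
      exact mul_le_mul_of_nonneg_left ht.2 hM0
  -- integrability of z^(1-β) * g2 z
  have hInt2 : IntervalIntegrable (fun z => z ^ ((1:ℝ) - β) * g2 z) volume 0 L := by
    apply (intervalIntegral.intervalIntegrable_rpow' (by linarith)).mul_continuousOn
    rwa [Set.uIcc_of_le hL0.le]
  -- integrability of g z * z^(-1-β)
  have hInt1 : IntervalIntegrable (fun z => g z * z ^ (-1 - β)) volume 0 L := by
    rw [intervalIntegrable_iff_integrableOn_Ioc_of_le hL0.le]
    have hMint : IntegrableOn (fun z : ℝ => M * z ^ ((1:ℝ) - β)) (Set.Ioc 0 L) volume := by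
      have := (intervalIntegral.intervalIntegrable_rpow' (a := 0) (b := L)
        (by linarith : (-1:ℝ) < 1 - β)).const_mul M
      rwa [intervalIntegrable_iff_integrableOn_Ioc_of_le hL0.le] at this
    refine MeasureTheory.Integrable.mono hMint ?_ ?_
    · apply ContinuousOn.aestronglyMeasurable ?_ measurableSet_Ioc
      apply ContinuousOn.mul (hgc.mono Set.Ioc_subset_Icc_self)
      intro z hz
      exact (Real.continuousAt_rpow_const z _ (Or.inl hz.1.ne')).continuousWithinAt
    · rw [ae_restrict_iff' measurableSet_Ioc]
      filter_upwards with z hz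
      have hz0 : 0 < z := hz.1
      have hrp : (0:ℝ) ≤ z ^ (-1 - β) := Real.rpow_nonneg hz0.le _
      have key : z * z * z ^ (-1 - β) = z ^ ((1:ℝ) - β) := by
        have : z * z * z ^ (-1 - β) = z ^ ((1:ℝ) + 1 + (-1 - β)) := by
          rw [Real.rpow_add hz0, Real.rpow_add hz0, Real.rpow_one]
        rw [this]; congr 1; ring
      calc ‖g z * z ^ (-1 - β)‖ = |g z| * z ^ (-1 - β) := by
            rw [norm_mul, Real.norm_eq_abs, Real.norm_eq_abs, abs_of_nonneg hrp]
        _ ≤ M * z * z * z ^ (-1 - β) := by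
            apply mul_le_mul_of_nonneg_right (hgb z ⟨hz0.le, hz.2⟩) hrp
        _ = M * (z ^ ((1:ℝ) - β)) := by rw [mul_assoc M, mul_assoc, key]
        _ ≤ ‖M * z ^ ((1:ℝ) - β)‖ := le_abs_self _
  -- the antiderivative F
  set F : ℝ → ℝ := fun z => (-(g z) * z ^ (-β)) / β + (g1 z * z ^ ((1:ℝ) - β)) / (β * (1 - β))
    with hF
  have hFd : ∀ z ∈ Set.Ioo (0:ℝ) L,
      HasDerivAt F (g z * z ^ (-1 - β) + (z ^ ((1:ℝ) - β) * g2 z) / (β * (1 - β))) z := by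
    intro z hz
    have hz0 : (0:ℝ) < z := hz.1
    have hzIcc : z ∈ Set.Icc (0:ℝ) L := ⟨hz0.le, hz.2.le⟩
    have hrp1 : HasDerivAt (fun z : ℝ => z ^ (-β)) (-β * z ^ (-β - 1)) z :=
      Real.hasDerivAt_rpow_const (Or.inl hz0.ne')
    have hrp2 : HasDerivAt (fun z : ℝ => z ^ ((1:ℝ) - β)) ((1 - β) * z ^ ((1:ℝ) - β - 1)) z :=
      Real.hasDerivAt_rpow_const (Or.inl hz0.ne')
    have hd1 := (((hgd z hzIcc).neg.mul hrp1).div_const β)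
    have hd2 := (((hg1d z hzIcc).mul hrp2).div_const (β * (1 - β)))
    have : HasDerivAt F _ z := hd1.add hd2
    convert this using 1
    have e1 : z ^ (-β - 1) = z ^ (-1 - β) := by congr 1; ring
    have e2 : z ^ ((1:ℝ) - β - 1) = z ^ (-β) := by congr 1; ring
    rw [e1, e2, Pi.neg_apply]
    field_simp
    ring
  -- limit of F at 0+
  have htend0 : Tendsto F (𝓝[>] (0:ℝ)) (𝓝 0) := by
    have hC : Tendsto (fun z : ℝ => (M / β + M / (β * (β - 1))) * z ^ ((2:ℝ) - β))
        (𝓝[>] (0:ℝ)) (𝓝 0) := by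
      have h1 : Tendsto (fun z : ℝ => z ^ ((2:ℝ) - β)) (𝓝 (0:ℝ)) (𝓝 0) := by
        have := (Real.continuousAt_rpow_const 0 (2 - β) (Or.inr (by linarith))).tendsto
        simpa [Real.zero_rpow (show (2:ℝ) - β ≠ 0 by intro h; linarith [sub_eq_zero.mp h])]
          using this
      simpa using ((h1.mono_left nhdsWithin_le_nhds).const_mul (M / β + M / (β * (β - 1))))
    apply squeeze_zero_norm' ?_ hC
    filter_upwards [Ioc_mem_nhdsGT_of_mem ⟨le_refl (0:ℝ), hL0⟩] with z hz
    have hz0 : (0:ℝ) < z := hz.1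
    have hzIcc : z ∈ Set.Icc (0:ℝ) L := ⟨hz0.le, hz.2⟩
    have key1 : z * z * z ^ (-β) = z ^ ((2:ℝ) - β) := by
      have : z * z * z ^ (-β) = z ^ ((1:ℝ) + 1 + (-β)) := by
        rw [Real.rpow_add hz0, Real.rpow_add hz0, Real.rpow_one]
      rw [this]; congr 1; ring
    have key2 : z * z ^ ((1:ℝ) - β) = z ^ ((2:ℝ) - β) := by
      have : z * z ^ ((1:ℝ) - β) = z ^ ((1:ℝ) + (1 - β)) := by
        rw [Real.rpow_add hz0, Real.rpow_one]
      rw [this]; congr 1; ring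
    have hβ1' : (0:ℝ) < β - 1 := by linarith
    have hb1 : ‖(-(g z) * z ^ (-β)) / β‖ ≤ M / β * z ^ ((2:ℝ) - β) := by
      rw [norm_div, norm_mul, norm_neg, Real.norm_eq_abs, Real.norm_eq_abs, Real.norm_eq_abs,
        abs_of_pos hβ0, abs_of_nonneg (Real.rpow_nonneg hz0.le (-β))]
      rw [div_le_iff₀ hβ0]
      calc |g z| * z ^ (-β) ≤ M * z * z * z ^ (-β) :=
            mul_le_mul_of_nonneg_right (hgb z hzIcc) (Real.rpow_nonneg hz0.le _)
        _ = M * z ^ ((2:ℝ) - β) := by rw [mul_assoc M, mul_assoc, key1]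
        _ = M / β * z ^ ((2:ℝ) - β) * β := by field_simp
    have hb2 : ‖(g1 z * z ^ ((1:ℝ) - β)) / (β * (1 - β))‖
        ≤ M / (β * (β - 1)) * z ^ ((2:ℝ) - β) := by
      have habs : |β * (1 - β)| = β * (β - 1) := by
        rw [abs_mul, abs_of_pos hβ0, abs_sub_comm, abs_of_pos hβ1']
      rw [norm_div, norm_mul, Real.norm_eq_abs, Real.norm_eq_abs, Real.norm_eq_abs,
        abs_of_nonneg (Real.rpow_nonneg hz0.le _), habs]
      rw [div_le_iff₀ (by positivity : (0:ℝ) < β * (β - 1))]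
      calc |g1 z| * z ^ ((1:ℝ) - β) ≤ M * z * z ^ ((1:ℝ) - β) :=
            mul_le_mul_of_nonneg_right (hg1b z hzIcc) (Real.rpow_nonneg hz0.le _)
        _ = M * z ^ ((2:ℝ) - β) := by rw [mul_assoc, key2]
        _ = M / (β * (β - 1)) * z ^ ((2:ℝ) - β) * (β * (β - 1)) := by field_simp
    calc ‖F z‖ ≤ ‖(-(g z) * z ^ (-β)) / β‖ + ‖(g1 z * z ^ ((1:ℝ) - β)) / (β * (1 - β))‖ :=
          norm_add_le _ _
      _ ≤ M / β * z ^ ((2:ℝ) - β) + M / (β * (β - 1)) * z ^ ((2:ℝ) - β) := add_le_add hb1 hb2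
      _ = (M / β + M / (β * (β - 1))) * z ^ ((2:ℝ) - β) := by ring
  -- limit of F at L-
  have hFcontL : ContinuousAt F L := by
    have h1 : ContinuousAt (fun z : ℝ => z ^ (-β)) L :=
      Real.continuousAt_rpow_const L _ (Or.inl hL0.ne')
    have h2 : ContinuousAt (fun z : ℝ => z ^ ((1:ℝ) - β)) L :=
      Real.continuousAt_rpow_const L _ (Or.inl hL0.ne')
    have hgL := (hgd L ⟨hL0.le, le_refl _⟩).continuousAt
    have hg1L := (hg1d L ⟨hL0.le, le_refl _⟩).continuousAt
    exact ((hgL.neg.mul h1).div_const β).add ((hg1L.mul h2).div_const (β * (1 - β)))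
  have htendL : Tendsto F (𝓝[<] L) (𝓝 (F L)) := hFcontL.tendsto.mono_left nhdsWithin_le_nhds
  -- FTC
  have hkey : ∫ z in (0:ℝ)..L,
      (g z * z ^ (-1 - β) + (z ^ ((1:ℝ) - β) * g2 z) / (β * (1 - β))) = F L - 0 :=
    intervalIntegral.integral_eq_sub_of_hasDerivAt_of_tendsto hL0 hFd
      (hInt1.add (hInt2.div_const _)) htend0 htendL
  rw [sub_zero, intervalIntegral.integral_add hInt1 (hInt2.div_const _),
    intervalIntegral.integral_div] at hkey
  -- substitution relating the two integrals
  have hsub : ∫ z in (0:ℝ)..L, z ^ ((1:ℝ) - β) * g2 z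
      = ∫ t in x..a, (t - x) ^ (1 - β) * f'' t := by
    have := intervalIntegral.integral_comp_add_left
      (a := (0:ℝ)) (b := L) (fun t => (t - x) ^ ((1:ℝ) - β) * f'' t) x
    simp only [add_zero] at this
    rw [show x + L = a by simp [hLdef]] at this
    rw [← this]
    congr 1
    funext z
    simp [hg2]
  -- identify the statement's integral with our g-integral
  have hJ : (∫ z in (0:ℝ)..L, (f (x + z) - f x - f' x * z) * z ^ (-1 - β))
      = ∫ z in (0:ℝ)..L, g z * z ^ (-1 - β) := by
    congr 1
  rw [hJ]
  -- Gamma identities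
  have hGne : Real.Gamma (-β) ≠ 0 := by
    apply Real.Gamma_ne_zero
    intro m hm
    have hβm : β = (m : ℝ) := by linarith [neg_eq_iff_eq_neg.mp hm]
    rcases m with _ | _ | m
    · simp at hβm; linarith
    · simp at hβm; linarith
    · have : (2:ℝ) ≤ (m + 2 : ℕ) := by push_cast; linarith [Nat.cast_nonneg (α := ℝ) m]
      linarith [hβm ▸ this]
  have hΓ1 : Real.Gamma (1 - β) = -β * Real.Gamma (-β) := by
    rw [show (1:ℝ) - β = -β + 1 by ring, Real.Gamma_add_one (by linarith : -β ≠ 0)]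
  have hΓ2 : Real.Gamma (2 - β) = (1 - β) * Real.Gamma (1 - β) := by
    rw [show (2:ℝ) - β = (1 - β) + 1 by ring, Real.Gamma_add_one h1β]
  -- final algebra
  have hkey' : (∫ z in (0:ℝ)..L, g z * z ^ (-1 - β))
      = F L - (∫ z in (0:ℝ)..L, z ^ ((1:ℝ) - β) * g2 z) / (β * (1 - β)) := by
    linarith [hkey]
  have hgL : g L = f a - f x - f' x * L := by
    simp only [hg]; rw [show x + L = a by simp [hLdef]]
  have hg1L : g1 L = f' a - f' x := by
    simp only [hg1]; rw [show x + L = a by simp [hLdef]]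
  have hLrel : L * L ^ (-β) = L ^ ((1:ℝ) - β) := by
    rw [show (1:ℝ) - β = 1 + -β by ring, Real.rpow_add hL0, Real.rpow_one]
  have hFL : F L = ((f x - f a) * L ^ (-β) + f' x * L ^ ((1:ℝ) - β)) / β
      + ((f' a - f' x) * L ^ ((1:ℝ) - β)) / (β * (1 - β)) := by
    show (-(g L) * L ^ (-β)) / β + (g1 L * L ^ ((1:ℝ) - β)) / (β * (1 - β)) = _
    rw [hgL, hg1L, show -(f a - f x - f' x * L) * L ^ (-β)
      = (f x - f a) * L ^ (-β) + f' x * (L * L ^ (-β)) from by ring, hLrel]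
  rw [← hsub, hkey', hFL, hΓ2, hΓ1]
  field_simp
  ring
end

section
/- Let β ∈ (1,2), f ∈ C^2[a,∞) bounded with bounded first and second derivatives. Then the regularized interrupted generator A_{a+⋆}f(x) = (1/Γ(-β)) ∫_0^{x-a} (f(x-z)-f(x)+f'(x)z) z^{-1-β} dz + (f(x)-f(a))(x-a)^{-β}/Γ(1-β) + (β f'(x) - f'(a))(x-a)^{1-β}/Γ(2-β) tends to 0 as x → a+. -/
open Real MeasureTheory Set Filter Topology

/-- Lipschitz estimate from a bounded derivative on `Icc`. -/
lemma lip_of_deriv_bound {g g' : ℝ → ℝ} {s t C : ℝ}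
    (hg : ∀ u ∈ Set.Icc s t, HasDerivAt g (g' u) u)
    (hC : ∀ u ∈ Set.Icc s t, |g' u| ≤ C) (hst : s ≤ t) :
    |g t - g s| ≤ C * (t - s) := by
  have := Convex.norm_image_sub_le_of_norm_hasDerivWithin_le
    (f := g) (f' := g') (s := Set.Icc s t) (C := C)
    (fun u hu => (hg u hu).hasDerivWithinAt) (fun u hu => hC u hu) (convex_Icc s t)
    (Set.left_mem_Icc.2 hst) (Set.right_mem_Icc.2 hst)
  simpa [Real.norm_eq_abs, abs_of_nonneg (sub_nonneg.2 hst)] using this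

/-- For β ∈ (1,2) and f ∈ C²[a,∞) bounded with bounded first and second
derivatives, the regularized interrupted generator A_{a+⋆}f(x) tends to 0 as x → a+. -/
theorem regularized_generator_vanishes_at_boundary (β a : ℝ) (hβ : β ∈ Set.Ioo (1:ℝ) 2)
    (f f' f'' : ℝ → ℝ) (hf' : ∀ t ∈ Set.Ici a, HasDerivAt f (f' t) t)
    (hf'' : ∀ t ∈ Set.Ici a, HasDerivAt f' (f'' t) t)
    (hf''c : ContinuousOn f'' (Set.Ici a))
    (hbdd : ∃ M : ℝ, ∀ t, |f t| ≤ M ∧ |f' t| ≤ M ∧ |f'' t| ≤ M) :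
    Filter.Tendsto (fun x : ℝ =>
        (1 / Real.Gamma (-β)) *
          (∫ z in (0:ℝ)..(x - a), (f (x - z) - f x + f' x * z) * z ^ (-1 - β))
        + (f x - f a) * (x - a) ^ (-β) / Real.Gamma (1 - β)
        + (β * f' x - f' a) * (x - a) ^ (1 - β) / Real.Gamma (2 - β))
      (nhdsWithin a (Set.Ioi a)) (nhds 0) := by
  obtain ⟨hβ1, hβ2⟩ := hβ
  obtain ⟨M, hM⟩ := hbdd
  have hM0 : 0 ≤ M := le_trans (abs_nonneg _) (hM a).1
  have hfc : ContinuousOn f (Set.Ici a) :=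
    fun t ht => (hf' t ht).continuousAt.continuousWithinAt
  -- Lipschitz estimate for f'
  have lip : ∀ s t : ℝ, a ≤ s → s ≤ t → |f' t - f' s| ≤ M * (t - s) := by
    intro s t hs hst
    exact lip_of_deriv_bound (fun u hu => hf'' u (le_trans hs hu.1))
      (fun u hu => (hM u).2.2) hst
  -- second-order Taylor estimate at a
  have taylorA : ∀ x : ℝ, a ≤ x → |f x - f a - f' a * (x - a)| ≤ M * (x - a) * (x - a) := by
    intro x hx
    have h := lip_of_deriv_bound (g := fun t => f t - f' a * t) (g' := fun t => f' t - f' a)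
      (s := a) (t := x) (C := M * (x - a)) ?_ ?_ hx
    · have : f x - f' a * x - (f a - f' a * a) = f x - f a - f' a * (x - a) := by ring
      simpa [this] using h
    · intro u hu
      exact (hf' u hu.1).sub (by simpa using (hasDerivAt_id u).const_mul (f' a))
    · intro u hu
      calc |f' u - f' a| ≤ M * (u - a) := lip a u le_rfl hu.1
        _ ≤ M * (x - a) := by
            apply mul_le_mul_of_nonneg_left (by linarith [hu.2]) hM0
  -- second-order Taylor estimate at x (in the integrand)
  have taylorX : ∀ x : ℝ, a ≤ x → ∀ z ∈ Set.Icc (0:ℝ) (x - a),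
      |f (x - z) - f x + f' x * z| ≤ M * z * z := by
    intro x hx z hz
    have h := lip_of_deriv_bound (g := fun u => f (x - u) + f' x * u)
      (g' := fun u => f' x - f' (x - u)) (s := 0) (t := z) (C := M * z) ?_ ?_ hz.1
    · have he : f (x - z) - f x + f' x * z = f (x - z) + f' x * z - (f (x - 0) + f' x * 0) := by
        simp only [sub_zero, mul_zero, add_zero]; ring
      have h' : |f (x - z) + f' x * z - (f (x - 0) + f' x * 0)| ≤ M * z * (z - 0) := h
      rw [he]; simpa using h'
    · intro u hu
      have hxu : a ≤ x - u := by
        have := hu.2; have := hz.2; linarith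
      have h1 : HasDerivAt (fun v : ℝ => f (x - v)) (f' (x - u) * (-1)) u :=
        (hf' (x - u) hxu).comp u (by simpa using (hasDerivAt_id u).const_sub x)
      have h2 : HasDerivAt (fun v : ℝ => f' x * v) (f' x) u := by
        simpa using (hasDerivAt_id u).const_mul (f' x)
      have := h1.add h2
      exact this.congr_deriv (by show f' (x - u) * (-1) + f' x = f' x - f' (x - u); ring)
    · intro u hu
      have hxu : a ≤ x - u := by
        have := hu.2; have := hz.2; linarith
      have := lip (x - u) x hxu (by linarith [hu.1])
      calc |f' x - f' (x - u)| ≤ M * (x - (x - u)) := this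
        _ = M * u := by ring_nf
        _ ≤ M * z := mul_le_mul_of_nonneg_left hu.2 hM0
  -- Gamma facts
  have hg1ne : Real.Gamma (1 - β) ≠ 0 := by
    apply Real.Gamma_ne_zero
    intro m h
    rcases Nat.eq_zero_or_pos m with h0 | h0
    · rw [h0] at h; simp at h; linarith
    · have h1 : (1:ℝ) ≤ (m:ℝ) := by exact_mod_cast h0
      have : (1:ℝ) - β = -(m:ℝ) := h
      linarith
  have hg2 : Real.Gamma (2 - β) = (1 - β) * Real.Gamma (1 - β) := by
    have := Real.Gamma_add_one (s := 1 - β) (by intro h; apply hβ1.ne'; linarith)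
    rw [show (2:ℝ) - β = 1 - β + 1 by ring]
    exact this
  have hg2ne : Real.Gamma (2 - β) ≠ 0 := by
    rw [hg2]; exact mul_ne_zero (by intro h; apply hβ1.ne'; linarith) hg1ne
  set K : ℝ := |1 / Real.Gamma (-β)| * (M / (2 - β)) + M / |Real.Gamma (1 - β)|
      + β * M / |Real.Gamma (2 - β)| with hK
  -- the squeeze
  have key : ∀ x ∈ Set.Ioi a,
      |(1 / Real.Gamma (-β)) *
          (∫ z in (0:ℝ)..(x - a), (f (x - z) - f x + f' x * z) * z ^ (-1 - β))
        + (f x - f a) * (x - a) ^ (-β) / Real.Gamma (1 - β)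
        + (β * f' x - f' a) * (x - a) ^ (1 - β) / Real.Gamma (2 - β)|
        ≤ K * (x - a) ^ (2 - β) := by
    intro x hx
    set w : ℝ := x - a with hw
    have hw0 : 0 < w := by simp [hw]; exact hx
    have hax : a ≤ x := le_of_lt hx
    -- rewrite the boundary terms
    have hw1 : w ^ ((1:ℝ) - β) = w * w ^ (-β) := by
      rw [show (1:ℝ) - β = 1 + (-β) by ring, Real.rpow_add hw0, Real.rpow_one]
    have hw2 : w ^ ((2:ℝ) - β) = w * (w * w ^ (-β)) := by
      rw [show (2:ℝ) - β = 1 + (1 + (-β)) by ring, Real.rpow_add hw0, Real.rpow_one,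
        Real.rpow_add hw0, Real.rpow_one]
    have rearr : (f x - f a) * w ^ (-β) / Real.Gamma (1 - β)
        + (β * f' x - f' a) * w ^ ((1:ℝ) - β) / Real.Gamma (2 - β)
        = (f x - f a - f' a * w) * w ^ (-β) / Real.Gamma (1 - β)
        + β * (f' x - f' a) * w ^ ((1:ℝ) - β) / Real.Gamma (2 - β) := by
      rw [hg2, hw1]
      have h1β : (1:ℝ) - β ≠ 0 := by intro h; apply hβ1.ne'; linarith
      field_simp
      ring
    -- integral bound
    have hb : ∀ z ∈ Set.Ioc (0:ℝ) w,
        |(f (x - z) - f x + f' x * z) * z ^ (-1 - β)| ≤ M * z ^ ((1:ℝ) - β) := by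
      intro z hz
      have hz0 : 0 < z := hz.1
      have h1 : |f (x - z) - f x + f' x * z| ≤ M * z * z :=
        taylorX x hax z ⟨le_of_lt hz0, hz.2⟩
      have h2 : z ^ ((1:ℝ) - β) = z * z * z ^ (-1 - β) := by
        rw [show (1:ℝ) - β = 1 + (1 + (-1 - β)) by ring, Real.rpow_add hz0, Real.rpow_one,
          Real.rpow_add hz0, Real.rpow_one]; ring
      rw [abs_mul, h2]
      have hzp : |z ^ (-1 - β)| = z ^ (-1 - β) := abs_of_nonneg (Real.rpow_nonneg hz0.le _)
      rw [hzp]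
      calc |f (x - z) - f x + f' x * z| * z ^ (-1 - β)
          ≤ (M * z * z) * z ^ (-1 - β) :=
            mul_le_mul_of_nonneg_right h1 (Real.rpow_nonneg hz0.le _)
        _ = M * (z * z * z ^ (-1 - β)) := by ring
    have hint_bd : IntervalIntegrable (fun z => M * z ^ ((1:ℝ) - β)) volume 0 w :=
      (intervalIntegral.intervalIntegrable_rpow' (by linarith)).const_mul M
    have hmeas : AEStronglyMeasurable (fun z => (f (x - z) - f x + f' x * z) * z ^ (-1 - β))
        (volume.restrict (Set.uIoc (0:ℝ) w)) := by
      rw [Set.uIoc_of_le hw0.le]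
      apply ContinuousOn.aestronglyMeasurable _ measurableSet_Ioc
      apply ContinuousOn.mul
      · apply ContinuousOn.add
        · apply ContinuousOn.sub
          · apply hfc.comp (continuous_const.sub continuous_id).continuousOn
            intro z hz
            simp only [Set.mem_Ici, id_eq, Pi.sub_apply]
            simp only [Set.mem_Ioc] at hz
            have h2 := hz.2
            rw [hw] at h2
            linarith
          · exact continuousOn_const
        · exact (continuous_const.mul continuous_id).continuousOn
      · intro z hz
        exact (Real.continuousAt_rpow_const z _ (Or.inl (ne_of_gt hz.1))).continuousWithinAt
    have hInt : IntervalIntegrable (fun z => (f (x - z) - f x + f' x * z) * z ^ (-1 - β))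
        volume 0 w := by
      apply hint_bd.mono_fun hmeas
      filter_upwards [MeasureTheory.ae_restrict_mem measurableSet_uIoc] with z hz
      rw [Set.uIoc_of_le hw0.le] at hz
      have hle := hb z hz
      simp only [Real.norm_eq_abs]
      calc |(f (x - z) - f x + f' x * z) * z ^ (-1 - β)| ≤ M * z ^ ((1:ℝ) - β) := hle
        _ ≤ |M * z ^ ((1:ℝ) - β)| := le_abs_self _
    have hIval : (∫ z in (0:ℝ)..w, M * z ^ ((1:ℝ) - β)) = M * (w ^ ((2:ℝ) - β) / (2 - β)) := by
      rw [intervalIntegral.integral_const_mul, integral_rpow (Or.inl (by linarith))]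
      rw [show (1:ℝ) - β + 1 = 2 - β by ring, Real.zero_rpow (by intro h; linarith)]
      ring
    have hIbound : |∫ z in (0:ℝ)..w, (f (x - z) - f x + f' x * z) * z ^ (-1 - β)|
        ≤ M * (w ^ ((2:ℝ) - β) / (2 - β)) := by
      have hnn : 0 ≤ M * (w ^ ((2:ℝ) - β) / (2 - β)) := by
        have h2β : (0:ℝ) < 2 - β := by linarith
        positivity
      have hh := intervalIntegral.norm_integral_le_abs_of_norm_le (μ := volume)
        (f := fun z => (f (x - z) - f x + f' x * z) * z ^ (-1 - β))
        (g := fun z => M * z ^ ((1:ℝ) - β)) (a := 0) (b := w) ?_ hint_bd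
      · rw [hIval, abs_of_nonneg hnn] at hh
        simpa only [Real.norm_eq_abs] using hh
      · filter_upwards [MeasureTheory.ae_restrict_mem measurableSet_uIoc] with z hz
        rw [Set.uIoc_of_le hw0.le] at hz
        simpa only [Real.norm_eq_abs] using hb z hz
    -- assemble
    rw [add_assoc, rearr, ← add_assoc]
    have e1 : |(1 / Real.Gamma (-β)) *
        (∫ z in (0:ℝ)..w, (f (x - z) - f x + f' x * z) * z ^ (-1 - β))|
        ≤ |1 / Real.Gamma (-β)| * (M / (2 - β)) * w ^ ((2:ℝ) - β) := by
      rw [abs_mul]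
      calc |1 / Real.Gamma (-β)| * |∫ z in (0:ℝ)..w, (f (x - z) - f x + f' x * z) * z ^ (-1 - β)|
          ≤ |1 / Real.Gamma (-β)| * (M * (w ^ ((2:ℝ) - β) / (2 - β))) :=
            mul_le_mul_of_nonneg_left hIbound (abs_nonneg _)
        _ = |1 / Real.Gamma (-β)| * (M / (2 - β)) * w ^ ((2:ℝ) - β) := by ring
    have e2 : |(f x - f a - f' a * w) * w ^ (-β) / Real.Gamma (1 - β)|
        ≤ M / |Real.Gamma (1 - β)| * w ^ ((2:ℝ) - β) := by
      rw [abs_div, abs_mul, abs_of_nonneg (Real.rpow_nonneg hw0.le (-β))]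
      have h1 : |f x - f a - f' a * w| ≤ M * w * w := by
        have := taylorA x hax
        calc |f x - f a - f' a * w| = |f x - f a - f' a * (x - a)| := by rw [hw]
          _ ≤ M * (x - a) * (x - a) := this
          _ = M * w * w := by rw [← hw]
      calc |f x - f a - f' a * w| * w ^ (-β) / |Real.Gamma (1 - β)|
          ≤ (M * w * w) * w ^ (-β) / |Real.Gamma (1 - β)| := by
            gcongr
        _ = M / |Real.Gamma (1 - β)| * w ^ ((2:ℝ) - β) := by rw [hw2]; ring
    have e3 : |β * (f' x - f' a) * w ^ ((1:ℝ) - β) / Real.Gamma (2 - β)|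
        ≤ β * M / |Real.Gamma (2 - β)| * w ^ ((2:ℝ) - β) := by
      rw [abs_div, abs_mul, abs_mul, abs_of_nonneg (Real.rpow_nonneg hw0.le _),
        abs_of_nonneg (by linarith : (0:ℝ) ≤ β)]
      have h1 : |f' x - f' a| ≤ M * w := by
        have := lip a x le_rfl hax
        rw [hw]; exact this
      calc β * |f' x - f' a| * w ^ ((1:ℝ) - β) / |Real.Gamma (2 - β)|
          ≤ β * (M * w) * w ^ ((1:ℝ) - β) / |Real.Gamma (2 - β)| := by
            gcongr
        _ = β * M / |Real.Gamma (2 - β)| * w ^ ((2:ℝ) - β) := by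
            rw [hw1, hw2]; ring
    calc |(1 / Real.Gamma (-β)) *
          (∫ z in (0:ℝ)..w, (f (x - z) - f x + f' x * z) * z ^ (-1 - β))
        + (f x - f a - f' a * w) * w ^ (-β) / Real.Gamma (1 - β)
        + β * (f' x - f' a) * w ^ ((1:ℝ) - β) / Real.Gamma (2 - β)|
        ≤ |(1 / Real.Gamma (-β)) *
            (∫ z in (0:ℝ)..w, (f (x - z) - f x + f' x * z) * z ^ (-1 - β))|
          + |(f x - f a - f' a * w) * w ^ (-β) / Real.Gamma (1 - β)|
          + |β * (f' x - f' a) * w ^ ((1:ℝ) - β) / Real.Gamma (2 - β)| :=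
          (abs_add_le _ _).trans (by gcongr; exact abs_add_le _ _)
      _ ≤ K * w ^ ((2:ℝ) - β) := by
          rw [hK]
          have := e1; have := e2; have := e3
          nlinarith [Real.rpow_nonneg hw0.le ((2:ℝ) - β)]
  -- conclude by squeeze
  have hg0 : Filter.Tendsto (fun x : ℝ => K * (x - a) ^ ((2:ℝ) - β))
      (nhdsWithin a (Set.Ioi a)) (nhds 0) := by
    have h1 : Filter.Tendsto (fun x : ℝ => x - a) (nhdsWithin a (Set.Ioi a)) (nhds 0) := by
      have hc : Continuous fun x : ℝ => x - a := continuous_id.sub continuous_const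
      have : Filter.Tendsto (fun x : ℝ => x - a) (nhds a) (nhds (a - a)) := hc.tendsto a
      rw [sub_self] at this
      exact this.mono_left nhdsWithin_le_nhds
    have h2 : Filter.Tendsto (fun x : ℝ => (x - a) ^ ((2:ℝ) - β))
        (nhdsWithin a (Set.Ioi a)) (nhds 0) := by
      have := h1.rpow_const (p := 2 - β) (Or.inr (by linarith))
      simpa [Real.zero_rpow (show (2:ℝ) - β ≠ 0 by intro h; linarith)] using this
    simpa using h2.const_mul K
  apply squeeze_zero_norm' _ hg0
  filter_upwards [self_mem_nhdsWithin] with x hx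
  simpa [Real.norm_eq_abs] using key x hx
end
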